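/- Assume the Y structure with P(C=1) > 0 and P(C=0) > 0, and let d ∈ {0,1} with P(D=d) > 0. Then Y-bias on the covariance scale is a linear combination of the embedded V-biases: cov(X, Y | D=d) = [ ( p_{d|1} − p_{d|0} ) / P(D=d)^2 ] · [ p_{d|1} · P(C=1)^2 · cov(X, Y | C=1) − p_{d|0} · P(C=0)^2 · cov(X, Y | C=0) ]. -/

import Mathlib

open MeasureTheory ProbabilityTheory

variable {Ω : Type*} [MeasurableSpace Ω]

/-- The event that the random variable `X` takes the value `x`. -/
def ev (X : Ω → ℝ) (x : ℝ) : Set Ω := {ω | X ω = x}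

/-- The probability of an event, as a real number. -/
noncomputable def pr (P : Measure Ω) (s : Set Ω) : ℝ := (P s).toReal

/-- The conditional probability `P(s | t)`, as a real number. -/
noncomputable def cpr (P : Measure Ω) (s t : Set Ω) : ℝ := pr (P[|t]) s

/-- The covariance of two real-valued random variables. -/
noncomputable def rcov (P : Measure Ω) (X Y : Ω → ℝ) : ℝ :=
  ∫ ω, (X ω - ∫ ω', X ω' ∂P) * (Y ω - ∫ ω', Y ω' ∂P) ∂P

/-- The conditional covariance of two real-valued random variables given an event. -/
noncomputable def covCond (P : Measure Ω) (X Y : Ω → ℝ) (t : Set Ω) : ℝ :=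
  rcov (P[|t]) X Y

/-- The conditional variance of a real-valued random variable given an event. -/
noncomputable def varCond (P : Measure Ω) (X : Ω → ℝ) (t : Set Ω) : ℝ :=
  covCond P X X t

/-- A measurable `{0,1}`-valued random variable. -/
def IsBin (X : Ω → ℝ) : Prop := Measurable X ∧ ∀ ω, X ω = 0 ∨ X ω = 1

lemma meas_ev {X : Ω → ℝ} (hX : IsBin X) (x : ℝ) : MeasurableSet (ev X x) :=
  hX.1 (measurableSet_singleton x)

lemma pr_nonneg (P : Measure Ω) (s : Set Ω) : 0 ≤ pr P s := ENNReal.toReal_nonneg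

lemma ev_compl {Z : Ω → ℝ} (hZ : IsBin Z) {c e : ℝ}
    (h : (c = 0 ∧ e = 1) ∨ (c = 1 ∧ e = 0)) : ev Z e = (ev Z c)ᶜ := by
  ext ω
  rcases hZ.2 ω with h0 | h0 <;> rcases h with ⟨rfl, rfl⟩ | ⟨rfl, rfl⟩ <;>
    simp [ev, h0] <;> norm_num

lemma pr_split (P : Measure Ω) [IsFiniteMeasure P] (s : Set Ω) {Z : Ω → ℝ}
    (hZ : IsBin Z) {c e : ℝ} (h : (c = 0 ∧ e = 1) ∨ (c = 1 ∧ e = 0)) :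
    pr P s = pr P (s ∩ ev Z c) + pr P (s ∩ ev Z e) := by
  have := measure_inter_add_diff (μ := P) s (meas_ev hZ c)
  rw [Set.diff_eq, ← ev_compl hZ h] at this
  unfold pr
  rw [← ENNReal.toReal_add (measure_ne_top _ _) (measure_ne_top _ _), this]

lemma cpr_eq (P : Measure Ω) {t : Set Ω} (ht : MeasurableSet t) (s : Set Ω) :
    cpr P s t = pr P (t ∩ s) / pr P t := by
  unfold cpr pr
  rw [cond_apply ht, ENNReal.toReal_mul, ENNReal.toReal_inv, inv_mul_eq_div]

lemma isBin_eq_indicator {X : Ω → ℝ} (hX : IsBin X) :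
    X = (ev X 1).indicator (fun _ => (1:ℝ)) := by
  funext ω
  rcases hX.2 ω with h | h <;> simp [Set.indicator, ev, h]

lemma integral_isBin (μ : Measure Ω) {X : Ω → ℝ} (hX : IsBin X) :
    ∫ ω, X ω ∂μ = pr μ (ev X 1) := by
  conv_lhs => rw [show (fun ω => X ω) = X from rfl, isBin_eq_indicator hX]
  rw [integral_indicator_const (1:ℝ) (meas_ev hX 1), smul_eq_mul, mul_one]; rfl

lemma isBin_mul {X Y : Ω → ℝ} (hX : IsBin X) (hY : IsBin Y) :
    IsBin (fun ω => X ω * Y ω) := by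
  refine ⟨hX.1.mul hY.1, fun ω => ?_⟩
  rcases hX.2 ω with h1 | h1 <;> rcases hY.2 ω with h2 | h2 <;> simp [h1, h2]

lemma ev_mul_one {X Y : Ω → ℝ} (hX : IsBin X) (hY : IsBin Y) :
    ev (fun ω => X ω * Y ω) 1 = ev X 1 ∩ ev Y 1 := by
  ext ω
  rcases hX.2 ω with h1 | h1 <;> rcases hY.2 ω with h2 | h2 <;>
    simp [ev, h1, h2] <;> norm_num

lemma integrable_isBin (μ : Measure Ω) [IsFiniteMeasure μ] {X : Ω → ℝ} (hX : IsBin X) :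
    Integrable X μ := by
  rw [isBin_eq_indicator hX]
  exact (integrable_const (1:ℝ)).indicator (meas_ev hX 1)

lemma rcov_isBin (μ : Measure Ω) [IsProbabilityMeasure μ] {X Y : Ω → ℝ}
    (hX : IsBin X) (hY : IsBin Y) :
    rcov μ X Y = pr μ (ev X 1 ∩ ev Y 1) - pr μ (ev X 1) * pr μ (ev Y 1) := by
  have iX : Integrable X μ := integrable_isBin μ hX
  have iY : Integrable Y μ := integrable_isBin μ hY
  have iXY : Integrable (fun ω => X ω * Y ω) μ := integrable_isBin μ (isBin_mul hX hY)
  have hm := integral_isBin μ hX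
  have hn := integral_isBin μ hY
  set p := pr μ (ev X 1) with hp
  set q := pr μ (ev Y 1) with hq
  unfold rcov
  rw [hm, hn]
  have i1 : Integrable (fun ω => p * Y ω) μ := iY.const_mul p
  have i2 : Integrable (fun ω => q * X ω) μ := iX.const_mul q
  have i4 : Integrable (fun ω => X ω * Y ω - p * Y ω) μ := iXY.sub i1
  have i5 : Integrable (fun ω => X ω * Y ω - p * Y ω - q * X ω) μ := i4.sub i2
  have key : (fun ω => (X ω - p) * (Y ω - q))
      = fun ω => X ω * Y ω - p * Y ω - q * X ω + p * q := by
    funext ω; ring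
  rw [key, integral_add i5 (integrable_const _), integral_sub i4 i2,
    integral_sub iXY i1, integral_const_mul, integral_const_mul, integral_const,
    integral_isBin μ (isBin_mul hX hY), ev_mul_one hX hY, hm, hn]
  simp
  ring

lemma covCond_isBin (P : Measure Ω) [IsFiniteMeasure P] {t : Set Ω}
    (ht : MeasurableSet t) (hpt : 0 < pr P t) {X Y : Ω → ℝ}
    (hX : IsBin X) (hY : IsBin Y) :
    covCond P X Y t = (pr P (t ∩ (ev X 1 ∩ ev Y 1)) * pr P t
      - pr P (t ∩ ev X 1) * pr P (t ∩ ev Y 1)) / (pr P t) ^ 2 := by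
  have h0 : P t ≠ 0 := by
    intro h; rw [pr, h] at hpt; simp at hpt
  have : IsProbabilityMeasure (P[|t]) := cond_isProbabilityMeasure h0
  have h1 : covCond P X Y t
      = cpr P (ev X 1 ∩ ev Y 1) t - cpr P (ev X 1) t * cpr P (ev Y 1) t :=
    rcov_isBin (P[|t]) hX hY
  rw [h1, cpr_eq P ht, cpr_eq P ht, cpr_eq P ht]
  field_simp

lemma cancel_aux (r Q A : ℝ) (hQ : Q ≠ 0) : r * Q ^ 2 * (A / Q ^ 2) = r * A := by
  field_simp

lemma inter_rot3 (u s t : Set Ω) : (u ∩ s) ∩ t = (s ∩ t) ∩ u := by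
  ext ω; simp only [Set.mem_inter_iff]; tauto

lemma inter_rot3' (u s t : Set Ω) : u ∩ (s ∩ t) = (s ∩ t) ∩ u := by
  ext ω; simp only [Set.mem_inter_iff]; tauto

lemma inter_rot3'' (u t s : Set Ω) : (u ∩ t) ∩ s = (s ∩ t) ∩ u := by
  ext ω; simp only [Set.mem_inter_iff]; tauto

lemma inter_rot4 (v s t u : Set Ω) : ((v ∩ s) ∩ t) ∩ u = ((s ∩ t) ∩ u) ∩ v := by
  ext ω; simp only [Set.mem_inter_iff]; tauto

lemma inter_rot4' (v s t u : Set Ω) : (v ∩ (s ∩ t)) ∩ u = ((s ∩ t) ∩ u) ∩ v := by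
  ext ω; simp only [Set.mem_inter_iff]; tauto

lemma inter_rot4'' (v t s u : Set Ω) : ((v ∩ t) ∩ s) ∩ u = ((s ∩ t) ∩ u) ∩ v := by
  ext ω; simp only [Set.mem_inter_iff]; tauto


/-- Y-bias on the covariance scale is a linear combination of the embedded V-biases. -/
theorem Y_bias_cov_eq_combination_of_embedded_V_bias (P : Measure Ω) [IsProbabilityMeasure P]
    (X Y C D : Ω → ℝ) (hX : IsBin X) (hY : IsBin Y) (hC : IsBin C) (hD : IsBin D)
    (hX1 : 0 < pr P (ev X 1)) (hX1' : pr P (ev X 1) < 1)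
    (hY1 : 0 < pr P (ev Y 1)) (hY1' : pr P (ev Y 1) < 1)
    (hfact : ∀ x y γ d : ℝ, (x = 0 ∨ x = 1) → (y = 0 ∨ y = 1) → (γ = 0 ∨ γ = 1) →
      (d = 0 ∨ d = 1) →
      pr P (ev X x ∩ ev Y y ∩ ev C γ ∩ ev D d) =
        pr P (ev X x) * pr P (ev Y y) * cpr P (ev C γ) (ev X x ∩ ev Y y) *
          cpr P (ev D d) (ev C γ))
    (hC1 : 0 < pr P (ev C 1)) (hC0 : 0 < pr P (ev C 0))
    (d : ℝ) (hd : d = 0 ∨ d = 1) (hDd : 0 < pr P (ev D d)) :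
    covCond P X Y (ev D d) =
      (cpr P (ev D d) (ev C 1) - cpr P (ev D d) (ev C 0)) / (pr P (ev D d)) ^ 2 *
        (cpr P (ev D d) (ev C 1) * (pr P (ev C 1)) ^ 2 * covCond P X Y (ev C 1) -
          cpr P (ev D d) (ev C 0) * (pr P (ev C 0)) ^ 2 * covCond P X Y (ev C 0)) := by
  obtain ⟨e, hde⟩ : ∃ e : ℝ, (d = 0 ∧ e = 1) ∨ (d = 1 ∧ e = 0) := by
    rcases hd with rfl | rfl
    exacts [⟨1, Or.inl ⟨rfl, rfl⟩⟩, ⟨0, Or.inr ⟨rfl, rfl⟩⟩]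
  have he : e = 0 ∨ e = 1 := by
    rcases hde with ⟨_, h2⟩ | ⟨_, h2⟩
    exacts [Or.inr h2, Or.inl h2]
  have h01 : ((0:ℝ) = 0 ∧ (1:ℝ) = 1) ∨ ((0:ℝ) = 1 ∧ (1:ℝ) = 0) := Or.inl ⟨rfl, rfl⟩
  have h0e : (0:ℝ) = 0 ∨ (0:ℝ) = 1 := Or.inl rfl
  have h1e : (1:ℝ) = 0 ∨ (1:ℝ) = 1 := Or.inr rfl
  have hQ1ne : pr P (ev C 1) ≠ 0 := ne_of_gt hC1
  have hQ0ne : pr P (ev C 0) ≠ 0 := ne_of_gt hC0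
  have hπne : pr P (ev D d) ≠ 0 := ne_of_gt hDd
  -- r-sum: cpr D d + cpr D e over a given C-slice is 1
  have hrsum : ∀ γ : ℝ, (γ = 0 ∨ γ = 1) →
      cpr P (ev D d) (ev C γ) + cpr P (ev D e) (ev C γ) = 1 := by
    intro γ hγ
    have hQ : pr P (ev C γ) ≠ 0 := by rcases hγ with rfl | rfl; exacts [hQ0ne, hQ1ne]
    rw [cpr_eq P (meas_ev hC γ), cpr_eq P (meas_ev hC γ), ← add_div,
      ← pr_split P (ev C γ) hD hde, div_self hQ]
  -- key marginal: P(X=x, Y=y, C=γ)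
  have key : ∀ x y γ : ℝ, (x = 0 ∨ x = 1) → (y = 0 ∨ y = 1) → (γ = 0 ∨ γ = 1) →
      pr P (ev X x ∩ ev Y y ∩ ev C γ)
        = pr P (ev X x) * pr P (ev Y y) * cpr P (ev C γ) (ev X x ∩ ev Y y) := by
    intro x y γ hx hy hγ
    have h1 := pr_split P (ev X x ∩ ev Y y ∩ ev C γ) hD hde
    rw [hfact x y γ d hx hy hγ hd, hfact x y γ e hx hy hγ he] at h1
    rw [h1]
    linear_combination
      (pr P (ev X x) * pr P (ev Y y) * cpr P (ev C γ) (ev X x ∩ ev Y y)) * (hrsum γ hγ)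
  -- P(X=x, Y=y)
  have hT : ∀ x y : ℝ, (x = 0 ∨ x = 1) → (y = 0 ∨ y = 1) →
      pr P (ev X x ∩ ev Y y) = pr P (ev X x) * pr P (ev Y y) *
        (cpr P (ev C 0) (ev X x ∩ ev Y y) + cpr P (ev C 1) (ev X x ∩ ev Y y)) := by
    intro x y hx hy
    rw [pr_split P (ev X x ∩ ev Y y) hC h01, key x y 0 hx hy h0e, key x y 1 hx hy h1e]
    ring
  have hS : ∀ x y : ℝ, (x = 0 ∨ x = 1) → (y = 0 ∨ y = 1) →
      cpr P (ev C 0) (ev X x ∩ ev Y y) + cpr P (ev C 1) (ev X x ∩ ev Y y) = 0 ∨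
      cpr P (ev C 0) (ev X x ∩ ev Y y) + cpr P (ev C 1) (ev X x ∩ ev Y y) = 1 := by
    intro x y hx hy
    have hm : MeasurableSet (ev X x ∩ ev Y y) := (meas_ev hX x).inter (meas_ev hY y)
    by_cases hT0 : pr P (ev X x ∩ ev Y y) = 0
    · left
      rw [cpr_eq P hm, cpr_eq P hm, hT0, div_zero, div_zero, add_zero]
    · right
      rw [cpr_eq P hm, cpr_eq P hm, ← add_div,
        ← pr_split P (ev X x ∩ ev Y y) hC h01, div_self hT0]
  -- marginals of X and Y
  have hone : pr P (Set.univ : Set Ω) = 1 := by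
    unfold pr; simp
  have hXs := pr_split P (Set.univ : Set Ω) hX h01
  have hYs := pr_split P (Set.univ : Set Ω) hY h01
  rw [hone, Set.univ_inter, Set.univ_inter] at hXs hYs
  have hA0 : pr P (ev X 0) = 1 - pr P (ev X 1) := by linarith
  have hB0 : pr P (ev Y 0) = 1 - pr P (ev Y 1) := by linarith
  have hTsum : pr P (ev X 0 ∩ ev Y 0) + pr P (ev X 0 ∩ ev Y 1)
      + pr P (ev X 1 ∩ ev Y 0) + pr P (ev X 1 ∩ ev Y 1) = 1 := by
    have t0 := pr_split P (ev X 0) hY h01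
    have t1 := pr_split P (ev X 1) hY h01
    linarith
  have hTle : ∀ x y : ℝ, (x = 0 ∨ x = 1) → (y = 0 ∨ y = 1) →
      pr P (ev X x ∩ ev Y y) ≤ pr P (ev X x) * pr P (ev Y y) := by
    intro x y hx hy
    rcases hS x y hx hy with h | h <;> rw [hT x y hx hy, h]
    · rw [mul_zero]
      exact mul_nonneg (pr_nonneg P _) (pr_nonneg P _)
    · rw [mul_one]
  have hsum1 : pr P (ev X 0) * pr P (ev Y 0) + pr P (ev X 0) * pr P (ev Y 1)
      + pr P (ev X 1) * pr P (ev Y 0) + pr P (ev X 1) * pr P (ev Y 1) = 1 := by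
    rw [hA0, hB0]; ring
  have pX0 : 0 < pr P (ev X 0) := by rw [hA0]; linarith
  have pY0 : 0 < pr P (ev Y 0) := by rw [hB0]; linarith
  have hqsum : ∀ x y : ℝ, (x = 0 ∨ x = 1) → (y = 0 ∨ y = 1) →
      cpr P (ev C 0) (ev X x ∩ ev Y y) + cpr P (ev C 1) (ev X x ∩ ev Y y) = 1 := by
    intro x y hx hy
    rcases hS x y hx hy with h | h
    · exfalso
      have hxy0 : pr P (ev X x ∩ ev Y y) = 0 := by
        rw [hT x y hx hy, h, mul_zero]
      have k00 := hTle 0 0 h0e h0e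
      have k01 := hTle 0 1 h0e h1e
      have k10 := hTle 1 0 h1e h0e
      have k11 := hTle 1 1 h1e h1e
      have m00 := mul_pos pX0 pY0
      have m01 := mul_pos pX0 hY1
      have m10 := mul_pos hX1 pY0
      have m11 := mul_pos hX1 hY1
      rcases hx with rfl | rfl <;> rcases hy with rfl | rfl <;> linarith
    · exact h
  have hq0 : ∀ x y : ℝ, (x = 0 ∨ x = 1) → (y = 0 ∨ y = 1) →
      cpr P (ev C 0) (ev X x ∩ ev Y y) = 1 - cpr P (ev C 1) (ev X x ∩ ev Y y) := by
    intro x y hx hy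
    linarith [hqsum x y hx hy]
  -- Q decompositions
  have hQ1e := pr_split P (ev C 1) hX h01
  rw [pr_split P (ev C 1 ∩ ev X 0) hY h01, pr_split P (ev C 1 ∩ ev X 1) hY h01,
    inter_rot3 (ev C 1) (ev X 0) (ev Y 0), inter_rot3 (ev C 1) (ev X 0) (ev Y 1),
    inter_rot3 (ev C 1) (ev X 1) (ev Y 0), inter_rot3 (ev C 1) (ev X 1) (ev Y 1),
    key 0 0 1 h0e h0e h1e, key 0 1 1 h0e h1e h1e,
    key 1 0 1 h1e h0e h1e, key 1 1 1 h1e h1e h1e] at hQ1e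
  have hQ0e := pr_split P (ev C 0) hX h01
  rw [pr_split P (ev C 0 ∩ ev X 0) hY h01, pr_split P (ev C 0 ∩ ev X 1) hY h01,
    inter_rot3 (ev C 0) (ev X 0) (ev Y 0), inter_rot3 (ev C 0) (ev X 0) (ev Y 1),
    inter_rot3 (ev C 0) (ev X 1) (ev Y 0), inter_rot3 (ev C 0) (ev X 1) (ev Y 1),
    key 0 0 0 h0e h0e h0e, key 0 1 0 h0e h1e h0e,
    key 1 0 0 h1e h0e h0e, key 1 1 0 h1e h1e h0e] at hQ0e
  -- C-slice numerator pieces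
  have hCXY1e : pr P (ev C 1 ∩ (ev X 1 ∩ ev Y 1))
      = pr P (ev X 1) * pr P (ev Y 1) * cpr P (ev C 1) (ev X 1 ∩ ev Y 1) := by
    rw [inter_rot3' (ev C 1) (ev X 1) (ev Y 1)]
    exact key 1 1 1 h1e h1e h1e
  have hCXY0e : pr P (ev C 0 ∩ (ev X 1 ∩ ev Y 1))
      = pr P (ev X 1) * pr P (ev Y 1) * cpr P (ev C 0) (ev X 1 ∩ ev Y 1) := by
    rw [inter_rot3' (ev C 0) (ev X 1) (ev Y 1)]
    exact key 1 1 0 h1e h1e h0e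
  have hCX1e := pr_split P (ev C 1 ∩ ev X 1) hY h01
  rw [inter_rot3 (ev C 1) (ev X 1) (ev Y 0), inter_rot3 (ev C 1) (ev X 1) (ev Y 1),
    key 1 0 1 h1e h0e h1e, key 1 1 1 h1e h1e h1e] at hCX1e
  have hCX0e := pr_split P (ev C 0 ∩ ev X 1) hY h01
  rw [inter_rot3 (ev C 0) (ev X 1) (ev Y 0), inter_rot3 (ev C 0) (ev X 1) (ev Y 1),
    key 1 0 0 h1e h0e h0e, key 1 1 0 h1e h1e h0e] at hCX0e
  have hCY1e := pr_split P (ev C 1 ∩ ev Y 1) hX h01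
  rw [inter_rot3'' (ev C 1) (ev Y 1) (ev X 0), inter_rot3'' (ev C 1) (ev Y 1) (ev X 1),
    key 0 1 1 h0e h1e h1e, key 1 1 1 h1e h1e h1e] at hCY1e
  have hCY0e := pr_split P (ev C 0 ∩ ev Y 1) hX h01
  rw [inter_rot3'' (ev C 0) (ev Y 1) (ev X 0), inter_rot3'' (ev C 0) (ev Y 1) (ev X 1),
    key 0 1 0 h0e h1e h0e, key 1 1 0 h1e h1e h0e] at hCY0e
  -- D-slice pieces
  have hDXYe := pr_split P (ev D d ∩ (ev X 1 ∩ ev Y 1)) hC h01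
  rw [inter_rot4' (ev D d) (ev X 1) (ev Y 1) (ev C 0),
    inter_rot4' (ev D d) (ev X 1) (ev Y 1) (ev C 1),
    hfact 1 1 0 d h1e h1e h0e hd, hfact 1 1 1 d h1e h1e h1e hd] at hDXYe
  have hDXe := pr_split P (ev D d ∩ ev X 1) hY h01
  rw [pr_split P ((ev D d ∩ ev X 1) ∩ ev Y 0) hC h01,
    pr_split P ((ev D d ∩ ev X 1) ∩ ev Y 1) hC h01,
    inter_rot4 (ev D d) (ev X 1) (ev Y 0) (ev C 0),
    inter_rot4 (ev D d) (ev X 1) (ev Y 0) (ev C 1),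
    inter_rot4 (ev D d) (ev X 1) (ev Y 1) (ev C 0),
    inter_rot4 (ev D d) (ev X 1) (ev Y 1) (ev C 1),
    hfact 1 0 0 d h1e h0e h0e hd, hfact 1 0 1 d h1e h0e h1e hd,
    hfact 1 1 0 d h1e h1e h0e hd, hfact 1 1 1 d h1e h1e h1e hd] at hDXe
  have hDYe := pr_split P (ev D d ∩ ev Y 1) hX h01
  rw [pr_split P ((ev D d ∩ ev Y 1) ∩ ev X 0) hC h01,
    pr_split P ((ev D d ∩ ev Y 1) ∩ ev X 1) hC h01,
    inter_rot4'' (ev D d) (ev Y 1) (ev X 0) (ev C 0),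
    inter_rot4'' (ev D d) (ev Y 1) (ev X 0) (ev C 1),
    inter_rot4'' (ev D d) (ev Y 1) (ev X 1) (ev C 0),
    inter_rot4'' (ev D d) (ev Y 1) (ev X 1) (ev C 1),
    hfact 0 1 0 d h0e h1e h0e hd, hfact 0 1 1 d h0e h1e h1e hd,
    hfact 1 1 0 d h1e h1e h0e hd, hfact 1 1 1 d h1e h1e h1e hd] at hDYe
  -- P(D=d) decomposition
  have hCD0 : pr P (ev C 0 ∩ ev D d) = cpr P (ev D d) (ev C 0) * pr P (ev C 0) := by
    rw [cpr_eq P (meas_ev hC 0), div_mul_cancel₀ _ hQ0ne]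
  have hCD1 : pr P (ev C 1 ∩ ev D d) = cpr P (ev D d) (ev C 1) * pr P (ev C 1) := by
    rw [cpr_eq P (meas_ev hC 1), div_mul_cancel₀ _ hQ1ne]
  have hprD := pr_split P (ev D d) hC h01
  rw [Set.inter_comm (ev D d) (ev C 0), Set.inter_comm (ev D d) (ev C 1),
    hCD0, hCD1] at hprD
  -- numerator identity
  have hnum : pr P (ev D d ∩ (ev X 1 ∩ ev Y 1)) * pr P (ev D d)
        - pr P (ev D d ∩ ev X 1) * pr P (ev D d ∩ ev Y 1)
      = (cpr P (ev D d) (ev C 1) - cpr P (ev D d) (ev C 0)) *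
        (cpr P (ev D d) (ev C 1) *
            (pr P (ev C 1 ∩ (ev X 1 ∩ ev Y 1)) * pr P (ev C 1)
              - pr P (ev C 1 ∩ ev X 1) * pr P (ev C 1 ∩ ev Y 1))
          - cpr P (ev D d) (ev C 0) *
            (pr P (ev C 0 ∩ (ev X 1 ∩ ev Y 1)) * pr P (ev C 0)
              - pr P (ev C 0 ∩ ev X 1) * pr P (ev C 0 ∩ ev Y 1))) := by
    rw [hDXYe, hDXe, hDYe, hCXY1e, hCXY0e, hCX1e, hCX0e, hCY1e, hCY0e,
      hprD, hQ1e, hQ0e, hq0 0 0 h0e h0e, hq0 0 1 h0e h1e, hq0 1 0 h1e h0e,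
      hq0 1 1 h1e h1e, hA0, hB0]
    ring
  -- assemble
  rw [covCond_isBin P (meas_ev hD d) hDd hX hY,
    covCond_isBin P (meas_ev hC 1) hC1 hX hY,
    covCond_isBin P (meas_ev hC 0) hC0 hX hY,
    cancel_aux _ _ _ hQ1ne, cancel_aux _ _ _ hQ0ne, hnum, div_mul_eq_mul_div]
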